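/- arXiv:1910.08296 — 5 statements merged into one kernel-verified Lean document; each statement's English description precedes it below -/
import Mathlib

section
/- (Lemma 3) Fix real constants B > 0, γ̄₀ > 0, λ̂ ≥ 0, η ≥ 0, P_u > 0 and δ > 0. Consider minimizing F(E, t) = E − λ̂·t·B·log₂(1 + γ̄₀·E/t) + η·t over the feasible set {(E, t) : 0 ≤ E ≤ t·P_u, 0 ≤ t ≤ δ}, with the convention F(0, 0) = 0. Let p* = min(max(λ̂·B/ln 2 − 1/γ̄₀, 0), P_u) and g = p* − λ̂·B·log₂(1 + γ̄₀·p*) + η. Then: (i) if g < 0, the point (E, t) = (δ·p*, δ) is a global minimizer, with minimum value δ·g; (ii) if g > 0, the point (0, 0) is a global minimizer, with minimum value 0; (iii) if g = 0, then for every t ∈ [0, δ] the point (p*·t, t) is a global minimizer, with minimum value 0. -/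
private lemma aux_phi_min (g0 c Pmax : ℝ) (hg0 : 0 < g0) (hc : 0 ≤ c) (hP : 0 < Pmax)
    (p : ℝ) (hp0 : 0 ≤ p) (hpP : p ≤ Pmax) :
    min (max (c - 1 / g0) 0) Pmax
        - c * Real.log (1 + g0 * min (max (c - 1 / g0) 0) Pmax)
      ≤ p - c * Real.log (1 + g0 * p) := by
  set ps := min (max (c - 1 / g0) 0) Pmax with hps
  have hps0 : 0 ≤ ps := le_min (le_max_right _ _) hP.le
  have hpsP : ps ≤ Pmax := min_le_right _ _
  have h1ps : 0 < 1 + g0 * ps := by nlinarith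
  have h1p : 0 < 1 + g0 * p := by nlinarith
  have hg : g0 * (1 / g0) = 1 := by field_simp
  have hlog : Real.log (1 + g0 * p) - Real.log (1 + g0 * ps)
      ≤ g0 * (p - ps) / (1 + g0 * ps) := by
    have h := Real.log_le_sub_one_of_pos (x := (1 + g0 * p) / (1 + g0 * ps)) (by positivity)
    rw [Real.log_div h1p.ne' h1ps.ne'] at h
    have heq : (1 + g0 * p) / (1 + g0 * ps) - 1 = g0 * (p - ps) / (1 + g0 * ps) := by
      field_simp
      ring
    linarith [heq ▸ h]
  have hmain : c * (g0 * (p - ps) / (1 + g0 * ps)) ≤ p - ps := by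
    rw [mul_div_assoc', div_le_iff₀ h1ps]
    rcases le_or_gt (c - 1 / g0) 0 with h | h
    · have hps' : ps = 0 := by rw [hps, max_eq_right h, min_eq_left hP.le]
      rw [hps']
      have hcg : c * g0 ≤ 1 := by nlinarith
      nlinarith
    · rcases le_or_gt (c - 1 / g0) Pmax with h2 | h2
      · have hps' : ps = c - 1 / g0 := by rw [hps, max_eq_left h.le, min_eq_left h2]
        rw [hps']
        nlinarith
      · have hps' : ps = Pmax := by rw [hps, max_eq_left h.le, min_eq_right h2.le]
        rw [hps']
        have hcg : 1 + g0 * Pmax ≤ c * g0 := by nlinarith [mul_pos (sub_pos.2 h2) hg0]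
        nlinarith [mul_nonneg (sub_nonneg.2 hpP) (sub_nonneg.2 hcg)]
  have := mul_le_mul_of_nonneg_left hlog hc
  linarith

/-- (Lemma 3) Closed-form solution of dual subproblem (L1): minimizing `F(E,t) = E − λ̂·t·B·log₂(1 + γ̄₀E/t) + η·t` over `0 ≤ E ≤ t·P_u`, `0 ≤ t ≤ δ` (with `F(0,0) = 0`, which agrees with the formula under Lean's `E/0 = 0` convention). -/
theorem lemma3_subproblem_L1 (B g0 lam eta Pmax δ : ℝ)
    (hB : 0 < B) (hg0 : 0 < g0) (hlam : 0 ≤ lam) (heta : 0 ≤ eta)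
    (hP : 0 < Pmax) (hδ : 0 < δ) :
    let F : ℝ → ℝ → ℝ := fun E t =>
      E - lam * (t * (B * Real.logb 2 (1 + g0 * E / t))) + eta * t
    let S : Set (ℝ × ℝ) :=
      {x : ℝ × ℝ | 0 ≤ x.1 ∧ x.1 ≤ x.2 * Pmax ∧ 0 ≤ x.2 ∧ x.2 ≤ δ}
    let pstar : ℝ := min (max (lam * B / Real.log 2 - 1 / g0) 0) Pmax
    let g : ℝ := pstar - lam * (B * Real.logb 2 (1 + g0 * pstar)) + eta
    (g < 0 → (δ * pstar, δ) ∈ S ∧ (∀ x ∈ S, F (δ * pstar) δ ≤ F x.1 x.2) ∧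
        F (δ * pstar) δ = δ * g) ∧
    (0 < g → ((0 : ℝ), (0 : ℝ)) ∈ S ∧ (∀ x ∈ S, F 0 0 ≤ F x.1 x.2) ∧
        F 0 0 = 0) ∧
    (g = 0 → ∀ t ∈ Set.Icc (0 : ℝ) δ, (pstar * t, t) ∈ S ∧
        (∀ x ∈ S, F (pstar * t) t ≤ F x.1 x.2) ∧ F (pstar * t) t = 0) := by
  intro F S pstar g
  set c : ℝ := lam * B / Real.log 2 with hc_def
  have hlog2 : (0:ℝ) < Real.log 2 := Real.log_pos (by norm_num)
  have hc : 0 ≤ c := div_nonneg (mul_nonneg hlam hB.le) hlog2.le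
  have hconv : ∀ x : ℝ, lam * (B * Real.logb 2 x) = c * Real.log x := by
    intro x
    rw [Real.logb, hc_def]
    field_simp
  have hconv2 : ∀ t x : ℝ, lam * (t * (B * Real.logb 2 x)) = t * (c * Real.log x) := by
    intro t x
    rw [Real.logb, hc_def]
    field_simp
  have hps0 : 0 ≤ pstar := le_min (le_max_right _ _) hP.le
  have hpsP : pstar ≤ Pmax := min_le_right _ _
  have hgeq : g = pstar - c * Real.log (1 + g0 * pstar) + eta := by
    show pstar - lam * (B * Real.logb 2 (1 + g0 * pstar)) + eta = _
    rw [hconv]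
  -- F at (0,0) is 0
  have hF00 : F 0 0 = 0 := by
    show (0:ℝ) - lam * (0 * (B * Real.logb 2 (1 + g0 * 0 / 0))) + eta * 0 = 0
    ring
  -- value of F at (t * pstar, t) for t > 0
  have hFval : ∀ t : ℝ, 0 < t → F (t * pstar) t = t * g := by
    intro t ht
    have harg : 1 + g0 * (t * pstar) / t = 1 + g0 * pstar := by
      field_simp
    show t * pstar - lam * (t * (B * Real.logb 2 (1 + g0 * (t * pstar) / t))) + eta * t = t * g
    rw [harg, hconv2, hgeq]
    ring
  -- key lower bound: F x ≥ g * x.2 on S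
  have hkey : ∀ x ∈ S, g * x.2 ≤ F x.1 x.2 := by
    rintro ⟨E, t⟩ ⟨hE0, hEP, ht0, htδ⟩
    dsimp only at hE0 hEP ht0 htδ ⊢
    rcases eq_or_lt_of_le ht0 with ht | ht
    · obtain rfl : t = 0 := ht.symm
      have hE : E = 0 := le_antisymm (by linarith) hE0
      subst hE
      rw [hF00]
      simp
    · have hp0 : 0 ≤ E / t := div_nonneg hE0 ht.le
      have hpP : E / t ≤ Pmax := by
        rw [div_le_iff₀ ht]
        linarith [hEP]
      have hFEt : F E t = t * (E / t - c * Real.log (1 + g0 * (E / t)) + eta) := by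
        show E - lam * (t * (B * Real.logb 2 (1 + g0 * E / t))) + eta * t = _
        have harg : 1 + g0 * E / t = 1 + g0 * (E / t) := by ring_nf
        rw [harg, hconv2]
        field_simp
      rw [hFEt, hgeq]
      have hphi := aux_phi_min g0 c Pmax hg0 hc hP (E / t) hp0 hpP
      have : pstar - c * Real.log (1 + g0 * pstar) + eta
          ≤ E / t - c * Real.log (1 + g0 * (E / t)) + eta := by
        have : pstar = min (max (c - 1 / g0) 0) Pmax := rfl
        rw [this]
        linarith
      nlinarith [mul_le_mul_of_nonneg_left this ht.le]
  refine ⟨?_, ?_, ?_⟩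
  · intro hg
    refine ⟨⟨mul_nonneg hδ.le hps0, by dsimp only; nlinarith, hδ.le, le_refl δ⟩, ?_, hFval δ hδ⟩
    intro x hx
    have h1 := hkey x hx
    have h2 : g * δ ≤ g * x.2 := by
      have := hx.2.2.2
      nlinarith
    rw [hFval δ hδ]
    nlinarith
  · intro hg
    refine ⟨⟨le_refl 0, by simp, le_refl 0, hδ.le⟩, ?_, hF00⟩
    intro x hx
    have h1 := hkey x hx
    have h2 : 0 ≤ g * x.2 := mul_nonneg hg.le hx.2.2.1
    rw [hF00]
    linarith
  · intro hg t ht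
    obtain ⟨ht0, htδ⟩ := ht
    have hmem : (pstar * t, t) ∈ S :=
      ⟨mul_nonneg hps0 ht0, by dsimp only; nlinarith, ht0, htδ⟩
    have hval : F (pstar * t) t = 0 := by
      rcases eq_or_lt_of_le ht0 with h | h
      · rw [← h]
        simpa using hF00
      · rw [mul_comm, hFval t h, hg, mul_zero]
    exact ⟨hmem, fun x hx => by
      rw [hval]
      have h1 := hkey x hx
      have h2 : g * x.2 = 0 := by rw [hg, zero_mul]
      linarith, hval⟩
end

section
/- (Lemma 4) Fix real constants B > 0, γ̄₀ > 0, μ ≥ 0, η ≥ 0, P_u > 0 and δ > 0. Consider minimizing F(E, t) = E − μ·t·B·log₂(1 + γ̄₀·E/t) + η·t over the feasible set {(E, t) : 0 ≤ E ≤ t·P_u, 0 ≤ t ≤ δ}, with the convention F(0, 0) = 0. Let p* = min(max(μ·B/ln 2 − 1/γ̄₀, 0), P_u) and g = p* − μ·B·log₂(1 + γ̄₀·p*) + η. Then: (i) if g < 0, the point (E, t) = (δ·p*, δ) is a global minimizer, with minimum value δ·g; (ii) if g > 0, the point (0, 0) is a global minimizer, with minimum value 0; (iii) if g = 0, then for every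 t ∈ [0, δ] the point (p*·t, t) is a global minimizer, with minimum value 0. -/
lemma log_diff_le (a b : ℝ) (ha : 0 < a) (hb : 0 < b) :
    Real.log a - Real.log b ≤ (a - b) / b := by
  have h := Real.log_le_sub_one_of_pos (div_pos ha hb)
  rw [Real.log_div ha.ne' hb.ne'] at h
  have h2 : a / b - 1 = (a - b) / b := by field_simp
  linarith [h2 ▸ h]

lemma key_ineq (B g0 lam Pmax : ℝ) (hB : 0 < B) (hg0 : 0 < g0)
    (hlam : 0 ≤ lam) (hP : 0 < Pmax) (p : ℝ) (hp0 : 0 ≤ p) (hpP : p ≤ Pmax) :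
    min (max (lam * B / Real.log 2 - 1 / g0) 0) Pmax
      - lam * (B * Real.logb 2 (1 + g0 * min (max (lam * B / Real.log 2 - 1 / g0) 0) Pmax))
      ≤ p - lam * (B * Real.logb 2 (1 + g0 * p)) := by
  have hlog2 : 0 < Real.log 2 := Real.log_pos one_lt_two
  obtain ⟨c, hc⟩ : ∃ c, c = lam * B / Real.log 2 := ⟨_, rfl⟩
  have hc0 : 0 ≤ c := by rw [hc]; positivity
  have hconv : ∀ x : ℝ, lam * (B * Real.logb 2 x) = c * Real.log x := by
    intro x; rw [Real.logb, hc]; field_simp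
  rw [← hc, hconv, hconv]
  have ha : 0 < 1 + g0 * p := by positivity
  have hg0' : (0:ℝ) < 1 / g0 := by positivity
  rcases le_or_gt (c - 1 / g0) 0 with h0 | h0
  · have hps : min (max (c - 1 / g0) 0) Pmax = 0 := by
      rw [max_eq_right h0, min_eq_left hP.le]
    rw [hps]
    simp only [mul_zero, add_zero, Real.log_one, mul_zero, sub_zero, zero_sub]
    have hlog : Real.log (1 + g0 * p) ≤ g0 * p := by
      have := Real.log_le_sub_one_of_pos ha; linarith
    have hcg : c * g0 ≤ 1 := by
      have h1 : c ≤ 1 / g0 := by linarith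
      calc c * g0 ≤ (1 / g0) * g0 := by nlinarith
        _ = 1 := by field_simp
    nlinarith [mul_le_mul_of_nonneg_left hlog hc0]
  · have hcpos : 0 < c := by linarith
    rcases le_or_gt (c - 1 / g0) Pmax with h1 | h1
    · have hps : min (max (c - 1 / g0) 0) Pmax = c - 1 / g0 := by
        rw [max_eq_left h0.le, min_eq_left h1]
      rw [hps]
      have hb : 1 + g0 * (c - 1 / g0) = g0 * c := by
        rw [mul_sub, mul_one_div, div_self hg0.ne']; ring
      have hbpos : 0 < 1 + g0 * (c - 1 / g0) := by rw [hb]; positivity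
      have hld := log_diff_le (1 + g0 * p) (1 + g0 * (c - 1 / g0)) ha hbpos
      have heq : c * ((1 + g0 * p - (1 + g0 * (c - 1 / g0))) / (1 + g0 * (c - 1 / g0)))
          = p - (c - 1 / g0) := by
        rw [hb, ← mul_div_assoc, div_eq_iff (by positivity : (g0 * c) ≠ 0)]
        field_simp
        ring
      have h2 := mul_le_mul_of_nonneg_left hld hc0
      rw [heq] at h2
      linarith
    · have hps : min (max (c - 1 / g0) 0) Pmax = Pmax := by
        rw [max_eq_left h0.le, min_eq_right h1.le]
      rw [hps]
      have hbpos : 0 < 1 + g0 * Pmax := by positivity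
      have hld := log_diff_le (1 + g0 * p) (1 + g0 * Pmax) ha hbpos
      have hinv : g0 * (1 / g0) = 1 := by field_simp
      have hcg : 1 + g0 * Pmax ≤ c * g0 := by
        nlinarith [mul_lt_mul_of_pos_left h1 hg0]
      have h4 : c * ((1 + g0 * p - (1 + g0 * Pmax)) / (1 + g0 * Pmax)) ≤ p - Pmax := by
        rw [← mul_div_assoc, div_le_iff₀ hbpos]
        nlinarith [mul_nonneg (sub_nonneg.mpr hcg) (sub_nonneg.mpr hpP)]
      have h3 := mul_le_mul_of_nonneg_left hld hc0
      linarith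


/-- (Lemma 4) Closed-form solution of dual subproblem (L2): minimizing `F(E,t) = E − μ·t·B·log₂(1 + γ̄₀E/t) + η·t` over `0 ≤ E ≤ t·P_u`, `0 ≤ t ≤ δ` (with `F(0,0) = 0`, which agrees with the formula under Lean's `E/0 = 0` convention). -/
theorem lemma4_subproblem_L2 (B g0 lam eta Pmax δ : ℝ)
    (hB : 0 < B) (hg0 : 0 < g0) (hlam : 0 ≤ lam) (heta : 0 ≤ eta)
    (hP : 0 < Pmax) (hδ : 0 < δ) :
    let F : ℝ → ℝ → ℝ := fun E t =>
      E - lam * (t * (B * Real.logb 2 (1 + g0 * E / t))) + eta * t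
    let S : Set (ℝ × ℝ) :=
      {x : ℝ × ℝ | 0 ≤ x.1 ∧ x.1 ≤ x.2 * Pmax ∧ 0 ≤ x.2 ∧ x.2 ≤ δ}
    let pstar : ℝ := min (max (lam * B / Real.log 2 - 1 / g0) 0) Pmax
    let g : ℝ := pstar - lam * (B * Real.logb 2 (1 + g0 * pstar)) + eta
    (g < 0 → (δ * pstar, δ) ∈ S ∧ (∀ x ∈ S, F (δ * pstar) δ ≤ F x.1 x.2) ∧
        F (δ * pstar) δ = δ * g) ∧
    (0 < g → ((0 : ℝ), (0 : ℝ)) ∈ S ∧ (∀ x ∈ S, F 0 0 ≤ F x.1 x.2) ∧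
        F 0 0 = 0) ∧
    (g = 0 → ∀ t ∈ Set.Icc (0 : ℝ) δ, (pstar * t, t) ∈ S ∧
        (∀ x ∈ S, F (pstar * t) t ≤ F x.1 x.2) ∧ F (pstar * t) t = 0) := by
  intro F S pstar g
  have hps0 : 0 ≤ pstar := le_min (le_max_right _ _) hP.le
  have hpsP : pstar ≤ Pmax := min_le_right _ _
  -- evaluation of F at (t*p, t) for t > 0
  have heval : ∀ (p t : ℝ), 0 < t →
      F (t * p) t = t * (p - lam * (B * Real.logb 2 (1 + g0 * p)) + eta) := by
    intro p t ht
    show t * p - lam * (t * (B * Real.logb 2 (1 + g0 * (t * p) / t))) + eta * t = _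
    have : g0 * (t * p) / t = g0 * p := by
      field_simp
    rw [this]; ring
  have hF00 : F 0 0 = 0 := by
    show (0:ℝ) - lam * (0 * (B * Real.logb 2 (1 + g0 * 0 / 0))) + eta * 0 = 0
    ring
  -- the key lower bound: F x ≥ x.2 * g on S
  have hlb : ∀ x ∈ S, x.2 * g ≤ F x.1 x.2 := by
    rintro ⟨E, t⟩ ⟨hE0, hEP, ht0, htδ⟩
    rcases eq_or_lt_of_le ht0 with h | h
    · have hE : E = 0 := le_antisymm (by rw [← h] at hEP; simpa using hEP) hE0
      rw [← h, hE, hF00]; simp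
    · have hp0 : 0 ≤ E / t := div_nonneg hE0 h.le
      have hpP : E / t ≤ Pmax := by
        rw [div_le_iff₀ h]; linarith [hEP]
      have hE : E = t * (E / t) := by field_simp
      have := key_ineq B g0 lam Pmax hB hg0 hlam hP (E / t) hp0 hpP
      calc t * g ≤ t * (E / t - lam * (B * Real.logb 2 (1 + g0 * (E / t))) + eta) := by
            apply mul_le_mul_of_nonneg_left _ h.le
            show pstar - _ + eta ≤ _
            linarith [this]
        _ = F (t * (E / t)) t := (heval (E / t) t h).symm
        _ = F E t := by rw [← hE]
  -- evaluation at candidate points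
  have hcand : ∀ t : ℝ, 0 ≤ t → F (pstar * t) t = t * g := by
    intro t ht
    rcases eq_or_lt_of_le ht with h | h
    · rw [← h]; simpa using hF00
    · rw [mul_comm pstar t, heval pstar t h]
  constructor
  · intro hgneg
    refine ⟨⟨by positivity, show δ * pstar ≤ δ * Pmax by nlinarith, hδ.le, le_refl _⟩, ?_, ?_⟩
    · intro x hx
      have h1 := hlb x hx
      have h2 : δ * g ≤ x.2 * g := by
        have : x.2 ≤ δ := hx.2.2.2
        nlinarith
      have h3 : F (δ * pstar) δ = δ * g := by
        rw [mul_comm δ pstar, hcand δ hδ.le]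
      linarith
    · rw [mul_comm δ pstar, hcand δ hδ.le]
  constructor
  · intro hgpos
    refine ⟨⟨le_refl _, by simp, le_refl _, hδ.le⟩, ?_, hF00⟩
    intro x hx
    have h1 := hlb x hx
    have h2 : 0 ≤ x.2 * g := mul_nonneg hx.2.2.1 hgpos.le
    rw [hF00]; linarith
  · intro hg0' t ht
    obtain ⟨ht0, htδ⟩ := ht
    refine ⟨⟨by positivity, show pstar * t ≤ t * Pmax by nlinarith, ht0, htδ⟩, ?_, ?_⟩
    · intro x hx
      have h1 := hlb x hx
      rw [hcand t ht0, hg0']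
      simp only [mul_zero]
      rw [hg0', mul_zero] at h1
      linarith
    · rw [hcand t ht0, hg0', mul_zero]
end

section
/- (Lemma 5) Fix real constants B > 0, γ̄₁ > 0, ν ≥ 0, η ≥ 0, P_h > 0 and δ > 0. Consider minimizing F(E, t) = E − ν·t·B·log₂(1 + γ̄₁·E/t) + η·t over the feasible set {(E, t) : 0 ≤ E ≤ t·P_h, 0 ≤ t ≤ δ}, with the convention F(0, 0) = 0. Let p* = min(max(ν·B/ln 2 − 1/γ̄₁, 0), P_h) and g = p* − ν·B·log₂(1 + γ̄₁·p*) + η. Then: (i) if g < 0, the point (E, t) = (δ·p*, δ) is a global minimizer, with minimum value δ·g; (ii) if g > 0, the point (0, 0) is a global minimizer, with minimum value 0; (iii) if g = 0, then for every t ∈ [0, δ] the point (p*·t, t) is a global minimizer, with minimum value 0. -/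
set_option maxHeartbeats 800000


/-- (Lemma 5) Closed-form solution of dual subproblem (L3): minimizing `F(E,t) = E − ν·t·B·log₂(1 + γ̄₁E/t) + η·t` over `0 ≤ E ≤ t·P_h`, `0 ≤ t ≤ δ` (with `F(0,0) = 0`, which agrees with the formula under Lean's `E/0 = 0` convention). -/
theorem lemma5_subproblem_L3 (B g0 lam eta Pmax δ : ℝ)
    (hB : 0 < B) (hg0 : 0 < g0) (hlam : 0 ≤ lam) (heta : 0 ≤ eta)
    (hP : 0 < Pmax) (hδ : 0 < δ) :
    let F : ℝ → ℝ → ℝ := fun E t =>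
      E - lam * (t * (B * Real.logb 2 (1 + g0 * E / t))) + eta * t
    let S : Set (ℝ × ℝ) :=
      {x : ℝ × ℝ | 0 ≤ x.1 ∧ x.1 ≤ x.2 * Pmax ∧ 0 ≤ x.2 ∧ x.2 ≤ δ}
    let pstar : ℝ := min (max (lam * B / Real.log 2 - 1 / g0) 0) Pmax
    let g : ℝ := pstar - lam * (B * Real.logb 2 (1 + g0 * pstar)) + eta
    (g < 0 → (δ * pstar, δ) ∈ S ∧ (∀ x ∈ S, F (δ * pstar) δ ≤ F x.1 x.2) ∧
        F (δ * pstar) δ = δ * g) ∧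
    (0 < g → ((0 : ℝ), (0 : ℝ)) ∈ S ∧ (∀ x ∈ S, F 0 0 ≤ F x.1 x.2) ∧
        F 0 0 = 0) ∧
    (g = 0 → ∀ t ∈ Set.Icc (0 : ℝ) δ, (pstar * t, t) ∈ S ∧
        (∀ x ∈ S, F (pstar * t) t ≤ F x.1 x.2) ∧ F (pstar * t) t = 0) := by
  intro F S pstar g
  have hF : ∀ E t : ℝ, F E t =
      E - lam * (t * (B * Real.logb 2 (1 + g0 * E / t))) + eta * t := fun _ _ => rfl
  have hps_def : pstar = min (max (lam * B / Real.log 2 - 1 / g0) 0) Pmax := rfl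
  have hg_def : g = pstar - lam * (B * Real.logb 2 (1 + g0 * pstar)) + eta := rfl
  have hlog2 : (0:ℝ) < Real.log 2 := Real.log_pos one_lt_two
  set c : ℝ := lam * B / Real.log 2 with hc
  have hc0 : 0 ≤ c := by positivity
  have hps0 : 0 ≤ pstar := by
    rw [hps_def]; exact le_min (le_max_right _ _) hP.le
  have hpsP : pstar ≤ Pmax := by rw [hps_def]; exact min_le_right _ _
  have hden : 0 < 1 + g0 * pstar := by nlinarith
  have hlb : ∀ x : ℝ, 0 < x → lam * (B * Real.logb 2 x) = c * Real.log x := by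
    intro x hx
    rw [Real.logb, hc]
    field_simp
  -- key inequality : pstar minimizes p ↦ p - c log(1+g0 p) over [0, Pmax]
  have key : ∀ p : ℝ, 0 ≤ p → p ≤ Pmax →
      pstar - lam * (B * Real.logb 2 (1 + g0 * pstar)) ≤
      p - lam * (B * Real.logb 2 (1 + g0 * p)) := by
    intro p hp0 hpP
    have hdp : 0 < 1 + g0 * p := by nlinarith
    rw [hlb _ hdp, hlb _ hden]
    have hlogle : Real.log (1 + g0 * p) - Real.log (1 + g0 * pstar) ≤
        (g0 * p - g0 * pstar) / (1 + g0 * pstar) := by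
      have h1 := Real.log_le_sub_one_of_pos (div_pos hdp hden)
      rw [Real.log_div hdp.ne' hden.ne'] at h1
      have h2 : (1 + g0 * p) / (1 + g0 * pstar) - 1 =
          (g0 * p - g0 * pstar) / (1 + g0 * pstar) := by
        field_simp
        ring
      linarith [h1, h2.le, h2.ge]
    have h3 : c * (Real.log (1 + g0 * p) - Real.log (1 + g0 * pstar)) ≤
        c * ((g0 * p - g0 * pstar) / (1 + g0 * pstar)) :=
      mul_le_mul_of_nonneg_left hlogle hc0
    have hineq : c * (g0 * p - g0 * pstar) ≤ (p - pstar) * (1 + g0 * pstar) := by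
      rcases le_or_gt (c - 1 / g0) 0 with h | h
      · have hps : pstar = 0 := by
          rw [hps_def, max_eq_right h, min_eq_left hP.le]
        have hcg : c * g0 ≤ 1 := by
          have h1 : c ≤ 1 / g0 := by linarith
          calc c * g0 ≤ (1 / g0) * g0 := by nlinarith
            _ = 1 := by field_simp
        rw [hps]; nlinarith
      · rcases le_or_gt (c - 1 / g0) Pmax with h' | h'
        · have hps : pstar = c - 1 / g0 := by
            rw [hps_def, max_eq_left h.le, min_eq_left h']
          have h2 : g0 * pstar = g0 * c - 1 := by
            rw [hps]; field_simp
          nlinarith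
        · have hps : pstar = Pmax := by
            rw [hps_def, max_eq_left h.le, min_eq_right h'.le]
          have hcg : 1 + g0 * pstar ≤ c * g0 := by
            rw [hps]
            have h2 : g0 * (c - 1 / g0) = g0 * c - 1 := by
              field_simp
            nlinarith
          nlinarith [hpsP, hps ▸ hpP]
    have h4 : c * ((g0 * p - g0 * pstar) / (1 + g0 * pstar)) ≤ p - pstar := by
      rw [← mul_div_assoc, div_le_iff₀ hden]
      exact hineq
    linarith
  -- F(0,0) = 0
  have hF00 : F 0 0 = 0 := by
    rw [hF]; norm_num
  -- lower bound: F x ≥ x.2 * g on S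
  have hlow : ∀ x : ℝ × ℝ, x ∈ S → x.2 * g ≤ F x.1 x.2 := by
    rintro ⟨E, t⟩ ⟨hE0, hEP, ht0, htδ⟩
    rcases eq_or_lt_of_le ht0 with h0 | h0
    · have hE : E = 0 := by
        rw [← h0] at hEP
        have : E ≤ 0 := by simpa using hEP
        exact le_antisymm this hE0
      rw [← h0, hE, hF]
      norm_num
    · have hp0 : 0 ≤ E / t := div_nonneg hE0 h0.le
      have hpP : E / t ≤ Pmax := by
        rw [div_le_iff₀ h0]; linarith [hEP]
      have hk := key (E / t) hp0 hpP
      have hE' : E = t * (E / t) := by field_simp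
      have hdiv : g0 * E / t = g0 * (E / t) := by
        rw [mul_div_assoc]
      have hm := mul_le_mul_of_nonneg_left hk h0.le
      have hr : t * (E / t - lam * (B * Real.logb 2 (1 + g0 * (E / t)))) =
          E - lam * (t * (B * Real.logb 2 (1 + g0 * (E / t)))) := by
        rw [mul_sub, ← hE']
        ring
      have hl : t * (pstar - lam * (B * Real.logb 2 (1 + g0 * pstar))) =
          t * g - eta * t := by
        rw [hg_def]; ring
      rw [hF, hdiv]
      linarith [hm, hr, hl]
  -- value at (δ * pstar, δ)
  have hval : F (δ * pstar) δ = δ * g := by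
    have hdiv : g0 * (δ * pstar) / δ = g0 * pstar := by
      field_simp
    rw [hF, hdiv, hg_def]; ring
  -- value at (pstar * t, t) for t ≥ 0
  have hvalt : ∀ t : ℝ, 0 ≤ t → F (pstar * t) t = t * g := by
    intro t ht
    rcases eq_or_lt_of_le ht with h0 | h0
    · rw [← h0]; simpa using hF00
    · have hdiv : g0 * (pstar * t) / t = g0 * pstar := by
        field_simp
      rw [hF, hdiv, hg_def]; ring
  refine ⟨?_, ?_, ?_⟩
  · intro hgneg
    refine ⟨⟨by positivity, ?_, hδ.le, le_refl _⟩, ?_, hval⟩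
    · show δ * pstar ≤ δ * Pmax
      nlinarith
    rintro ⟨E, t⟩ hx
    have h1 := hlow ⟨E, t⟩ hx
    have ht : t ≤ δ := hx.2.2.2
    have : δ * g ≤ t * g := by nlinarith
    rw [hval]; linarith
  · intro hgpos
    refine ⟨⟨le_refl _, by norm_num, le_refl _, hδ.le⟩, ?_, hF00⟩
    rintro ⟨E, t⟩ hx
    have h1 := hlow ⟨E, t⟩ hx
    have ht : 0 ≤ t := hx.2.2.1
    rw [hF00]; nlinarith
  · intro hg0' t ht
    refine ⟨⟨mul_nonneg hps0 ht.1, ?_, ht.1, ht.2⟩, ?_, ?_⟩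
    · show pstar * t ≤ t * Pmax
      nlinarith [ht.1]
    · rintro ⟨E, s⟩ hx
      have h1 := hlow ⟨E, s⟩ hx
      rw [hvalt t ht.1, hg0']
      simpa [hg0'] using h1
    · rw [hvalt t ht.1, hg0']; ring
end

section
/- Let v₀ > 0 and let u > 0 and v be real numbers. Then u² ≥ √(1 + v⁴/(4·v₀⁴)) − v²/(2·v₀²) if and only if 1/u² ≤ u² + v²/v₀². -/
/-- For `v₀ > 0` and `u > 0`, the slack constraint
`u² ≥ √(1 + v⁴/(4v₀⁴)) − v²/(2v₀²)` is equivalent to `1/u² ≤ u² + v²/v₀²`. -/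
theorem slack_constraint_equiv (v₀ u v : ℝ) (hv₀ : 0 < v₀) (hu : 0 < u) :
    Real.sqrt (1 + v ^ 4 / (4 * v₀ ^ 4)) - v ^ 2 / (2 * v₀ ^ 2) ≤ u ^ 2 ↔
      1 / u ^ 2 ≤ u ^ 2 + v ^ 2 / v₀ ^ 2 := by
  have ha : v ^ 4 / (4 * v₀ ^ 4) = (v ^ 2 / (2 * v₀ ^ 2)) ^ 2 := by
    field_simp; ring
  rw [ha, sub_le_iff_le_add]
  set a := v ^ 2 / (2 * v₀ ^ 2) with hadef
  have ha0 : 0 ≤ a := by positivity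
  have hpos : 0 < u ^ 2 + a := by positivity
  rw [show Real.sqrt (1 + a ^ 2) ≤ u ^ 2 + a ↔ 1 + a ^ 2 ≤ (u ^ 2 + a) ^ 2 from
    ⟨fun h => by nlinarith [Real.sq_sqrt (by positivity : (0:ℝ) ≤ 1 + a ^ 2),
        Real.sqrt_nonneg (1 + a ^ 2)],
     fun h => by nlinarith [Real.sqrt_le_sqrt h, Real.sqrt_sq hpos.le,
        Real.sqrt_nonneg (1 + a ^ 2)]⟩]
  have hv2 : v ^ 2 / v₀ ^ 2 = 2 * a := by rw [hadef]; field_simp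
  rw [hv2, div_le_iff₀ (by positivity : (0:ℝ) < u ^ 2)]
  constructor <;> intro h <;> nlinarith
end

section
/- Let a > 0 and H > 0 be real constants, and let w, q, q_j ∈ ℝ². Then log₂(1 + a/(‖q − w‖² + H²)) ≥ log₂(1 + a/(‖q_j − w‖² + H²)) − (log₂ e) · a · (‖q − w‖² − ‖q_j − w‖²) / ((‖q_j − w‖² + H²) · (‖q_j − w‖² + H² + a)). -/
lemma sca_key (a u v : ℝ) (ha : 0 < a) (hu : 0 < u) (hv : 0 < v) :
    Real.log (1 + a / v) - a * (u - v) / (v * (v + a)) ≤ Real.log (1 + a / u) := by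
  have hua : 0 < u + a := by linarith
  have hva : 0 < v + a := by linarith
  have h1 : (1 : ℝ) + a / v = (v + a) / v := by field_simp
  have h2 : (1 : ℝ) + a / u = (u + a) / u := by field_simp
  rw [h1, h2, Real.log_div hva.ne' hv.ne', Real.log_div hua.ne' hu.ne']
  -- key bound: log t ≥ 1 - 1/t with t = ((u+a)*v)/((v+a)*u)
  set t : ℝ := ((u + a) * v) / ((v + a) * u) with ht
  have htpos : 0 < t := by positivity
  have hlog : Real.log (1 / t) ≤ 1 / t - 1 :=
    Real.log_le_sub_one_of_pos (by positivity)
  rw [Real.log_div one_ne_zero htpos.ne', Real.log_one] at hlog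
  have hlogt : Real.log t = Real.log (u + a) + Real.log v - (Real.log (v + a) + Real.log u) := by
    rw [ht, Real.log_div (by positivity) (by positivity),
      Real.log_mul hua.ne' hv.ne', Real.log_mul hva.ne' hu.ne']
  have hlb : 1 - 1 / t ≤ Real.log t := by linarith
  have hinv : 1 - 1 / t = a * (v - u) / ((u + a) * v) := by
    rw [ht]
    field_simp
    ring
  have hcmp : a * (v - u) / (v * (v + a)) ≤ a * (v - u) / ((u + a) * v) := by
    rw [div_le_div_iff₀ (by positivity) (by positivity)]
    nlinarith [sq_nonneg (u - v), mul_pos ha hv]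
  have hneg : -(a * (u - v) / (v * (v + a))) = a * (v - u) / (v * (v + a)) := by ring
  nlinarith [hcmp, hlb, hlogt, hinv]

/-- The SCA global lower bound (equations (32)–(34)): for `a > 0`, `H > 0`,
`log₂(1 + a/(‖q − w‖² + H²))` is lower-bounded by its first-order Taylor
expansion in the squared distance at the local point `q_j`. -/
theorem sca_rate_lower_bound (a H : ℝ) (ha : 0 < a) (hH : 0 < H)
    (q qj w : EuclideanSpace ℝ (Fin 2)) :
    Real.logb 2 (1 + a / (‖qj - w‖ ^ 2 + H ^ 2)) -
        Real.logb 2 (Real.exp 1) * a * (‖q - w‖ ^ 2 - ‖qj - w‖ ^ 2) /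
          ((‖qj - w‖ ^ 2 + H ^ 2) * (‖qj - w‖ ^ 2 + H ^ 2 + a)) ≤
      Real.logb 2 (1 + a / (‖q - w‖ ^ 2 + H ^ 2)) := by
  set u : ℝ := ‖q - w‖ ^ 2 + H ^ 2 with hu'
  set v : ℝ := ‖qj - w‖ ^ 2 + H ^ 2 with hv'
  have hu : 0 < u := by positivity
  have hv : 0 < v := by positivity
  have key := sca_key a u v ha hu hv
  have hL : 0 < Real.log 2 := Real.log_pos (by norm_num)
  have he : Real.logb 2 (Real.exp 1) = 1 / Real.log 2 := by
    rw [Real.logb, Real.log_exp]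
  have huv : ‖q - w‖ ^ 2 - ‖qj - w‖ ^ 2 = u - v := by rw [hu', hv']; ring
  simp only [Real.logb, Real.log_exp, huv]
  have heq : Real.log (1 + a / v) / Real.log 2 - 1 / Real.log 2 * a * (u - v) / (v * (v + a))
      = (Real.log (1 + a / v) - a * (u - v) / (v * (v + a))) / Real.log 2 := by
    field_simp
  rw [heq]
  exact div_le_div_of_nonneg_right key hL.le
end
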